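/- Let (Ω, P) be a probability space, S a measurable space, and z₁, …, z_m : Ω → S independent identically distributed random variables with m ≥ 2. Let K : S × S → ℝ be a bounded measurable symmetric kernel with K(x,x) = 0 for all x, and define T := m^{−2} Σ_{i≠j} K(z_i, z_j). Then Var(T) ≤ 4 · Var(K(z₁, z₂)) / m. -/

import Mathlib

open MeasureTheory ProbabilityTheory

/-- Variance bound for the V-statistic of a symmetric kernel vanishing on the
diagonal, built from i.i.d. samples. -/
theorem vstatistic_variance_bound
    {Ω S : Type*} [MeasureSpace Ω] [IsProbabilityMeasure (ℙ : Measure Ω)]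
    [MeasurableSpace S]
    (m : ℕ) (hm : 2 ≤ m) (z : Fin m → Ω → S)
    (hmeas : ∀ i, Measurable (z i))
    (hindep : iIndepFun z ℙ)
    (hident : ∀ i j, IdentDistrib (z i) (z j) ℙ ℙ)
    (K : S → S → ℝ)
    (hKmeas : Measurable fun p : S × S => K p.1 p.2)
    (hKbdd : ∃ C : ℝ, ∀ x y, |K x y| ≤ C)
    (hKsymm : ∀ x y, K x y = K y x)
    (hKdiag : ∀ x, K x x = 0) :
    variance (fun ω => ((m : ℝ) ^ 2)⁻¹ *
        ∑ i : Fin m, ∑ j : Fin m, if i = j then 0 else K (z i ω) (z j ω)) ℙ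
      ≤ 4 * variance (fun ω => K (z ⟨0, by omega⟩ ω) (z ⟨1, by omega⟩ ω)) ℙ / m := by
  classical
  obtain ⟨C₀, hC₀⟩ := hKbdd
  set C : ℝ := max C₀ 0 with hCdef
  have hC : ∀ x y, |K x y| ≤ C := fun x y => (hC₀ x y).trans (le_max_left _ _)
  have hC0 : 0 ≤ C := le_max_right _ _
  set i0 : Fin m := ⟨0, by omega⟩ with hi0def
  set i1 : Fin m := ⟨1, by omega⟩ with hi1def
  have hi01 : i0 ≠ i1 := by simp [hi0def, hi1def, Fin.ext_iff]
  set X : Fin m → Fin m → Ω → ℝ :=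
    fun i j ω => if i = j then 0 else K (z i ω) (z j ω) with hXdef
  have hXKcomp : ∀ i j, i ≠ j →
      X i j = (fun p : S × S => K p.1 p.2) ∘ (fun ω => (z i ω, z j ω)) := by
    intro i j hij; funext ω; simp [hXdef, hij]
  have hXmeas : ∀ i j, Measurable (X i j) := by
    intro i j
    by_cases hij : i = j
    · subst hij; simpa [hXdef] using (measurable_const : Measurable (fun _ : Ω => (0:ℝ)))
    · rw [hXKcomp i j hij]; exact hKmeas.comp ((hmeas i).prodMk (hmeas j))
  have hXbdd : ∀ i j ω, |X i j ω| ≤ C := by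
    intro i j ω
    by_cases hij : i = j
    · simp [hXdef, hij, hC0]
    · simpa [hXdef, hij] using hC (z i ω) (z j ω)
  have hXint : ∀ i j, Integrable (X i j) ℙ := fun i j =>
    (integrable_const C).mono' (hXmeas i j).aestronglyMeasurable
      (ae_of_all _ fun ω => by simpa using hXbdd i j ω)
  have hXmem : ∀ i j, MemLp (X i j) 2 ℙ := fun i j =>
    MemLp.of_bound (hXmeas i j).aestronglyMeasurable C
      (ae_of_all _ fun ω => by simpa using hXbdd i j ω)
  set c : Fin m → Fin m → ℝ := fun i j => ∫ ω, X i j ω ∂ℙ with hcdef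
  set Y : Fin m → Fin m → Ω → ℝ := fun i j ω => X i j ω - c i j with hYdef
  have hYmeas : ∀ i j, Measurable (Y i j) := fun i j =>
    (hXmeas i j).sub measurable_const
  have hcbdd : ∀ i j, |c i j| ≤ C := by
    intro i j
    calc |c i j| ≤ ∫ ω, |X i j ω| ∂ℙ := by
          simpa [hcdef] using
            norm_integral_le_integral_norm (μ := (ℙ : Measure Ω)) (X i j)
      _ ≤ ∫ _ω, C ∂ℙ :=
          integral_mono (hXint i j).abs (integrable_const C) (fun ω => hXbdd i j ω)
      _ = C := by simp
  have hYbdd : ∀ i j ω, |Y i j ω| ≤ 2 * C := by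
    intro i j ω
    have h1 : |Y i j ω| ≤ |X i j ω| + |c i j| := by
      simpa [hYdef, sub_eq_add_neg] using abs_add_le (X i j ω) (-(c i j))
    have := hXbdd i j ω; have := hcbdd i j; linarith
  have hYint : ∀ i j, Integrable (Y i j) ℙ := fun i j =>
    (hXint i j).sub (integrable_const _)
  have hYmean : ∀ i j, ∫ ω, Y i j ω ∂ℙ = 0 := by
    intro i j
    rw [hYdef]
    rw [integral_sub (hXint i j) (integrable_const _)]
    simp [hcdef]
  have hprodint : ∀ i j k l, Integrable (fun ω => Y i j ω * Y k l ω) ℙ := by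
    intro i j k l
    refine (integrable_const ((2*C)*(2*C))).mono'
      ((hYmeas i j).mul (hYmeas k l)).aestronglyMeasurable (ae_of_all _ fun ω => ?_)
    have := mul_le_mul (hYbdd i j ω) (hYbdd k l ω) (abs_nonneg _) (by positivity)
    simpa [abs_mul] using this
  have hYdiag : ∀ i, Y i i = fun _ => (0:ℝ) := by
    intro i; funext ω
    have hXii : X i i = fun _ => (0:ℝ) := by funext ω'; simp [hXdef]
    have hcii : c i i = 0 := by simp [hcdef, hXii]
    simp [hYdef, hXii, hcii]
  set σ2 : ℝ := variance (fun ω => K (z i0 ω) (z i1 ω)) ℙ with hσdef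
  have hσ0 : 0 ≤ σ2 := variance_nonneg _ _
  -- identical distribution of pairs
  have hmapzz : ∀ i j : Fin m, i ≠ j →
      Measure.map (fun ω => (z i ω, z j ω)) ℙ = (Measure.map (z i0) ℙ).prod (Measure.map (z i1) ℙ) := by
    intro i j hij
    rw [(indepFun_iff_map_prod_eq_prod_map_map (hmeas i).aemeasurable
        (hmeas j).aemeasurable).mp (hindep.indepFun hij),
      (hident i i0).map_eq, (hident j i1).map_eq]
  have hpairID : ∀ i j : Fin m, i ≠ j →
      IdentDistrib (fun ω => K (z i ω) (z j ω)) (fun ω => K (z i0 ω) (z i1 ω)) ℙ ℙ := by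
    intro i j hij
    have h1 : IdentDistrib (fun ω => (z i ω, z j ω)) (fun ω => (z i0 ω, z i1 ω)) ℙ ℙ :=
      ⟨((hmeas i).prodMk (hmeas j)).aemeasurable,
       ((hmeas i0).prodMk (hmeas i1)).aemeasurable,
       by rw [hmapzz i j hij, hmapzz i0 i1 hi01]⟩
    exact h1.comp hKmeas
  have hXvar : ∀ i j : Fin m, i ≠ j → variance (X i j) ℙ = σ2 := by
    intro i j hij
    have h2 : X i j = fun ω => K (z i ω) (z j ω) := by funext ω; simp [hXdef, hij]
    rw [h2, (hpairID i j hij).variance_eq, hσdef]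
  have hY2 : ∀ i j : Fin m, i ≠ j → ∫ ω, (Y i j ω)^2 ∂ℙ = σ2 := by
    intro i j hij
    have h := variance_eq_integral (hXmem i j).aemeasurable
    rw [hXvar i j hij] at h
    rw [h]
  -- vanishing cross terms
  have hzero : ∀ i j k l : Fin m, i ≠ j → k ≠ l → i ≠ k → i ≠ l → j ≠ k → j ≠ l →
      ∫ ω, Y i j ω * Y k l ω ∂ℙ = 0 := by
    intro i j k l hij hkl hik hil hjk hjl
    have hindXX : IndepFun (X i j) (X k l) ℙ := by
      rw [hXKcomp i j hij, hXKcomp k l hkl]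
      exact (hindep.indepFun_prodMk_prodMk hmeas i j k l hik hil hjk hjl).comp hKmeas hKmeas
    have hindYY : IndepFun (Y i j) (Y k l) ℙ := by
      have e1 : Y i j = (fun x => x - c i j) ∘ X i j := by funext ω; simp [hYdef]
      have e2 : Y k l = (fun x => x - c k l) ∘ X k l := by funext ω; simp [hYdef]
      rw [e1, e2]
      exact hindXX.comp (measurable_id.sub_const (c i j)) (measurable_id.sub_const (c k l))
    have := hindYY.integral_mul_eq_mul_integral (hYint i j).aestronglyMeasurable (hYint k l).aestronglyMeasurable
    calc ∫ ω, Y i j ω * Y k l ω ∂ℙ = ∫ ω, (Y i j * Y k l) ω ∂ℙ := rfl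
      _ = (∫ ω, Y i j ω ∂ℙ) * ∫ ω, Y k l ω ∂ℙ := this
      _ = 0 := by rw [hYmean, hYmean, mul_zero]
  -- Cauchy-Schwarz style bound
  have hbound : ∀ i j k l : Fin m, i ≠ j → k ≠ l →
      ∫ ω, Y i j ω * Y k l ω ∂ℙ ≤ σ2 := by
    intro i j k l hij hkl
    have hint1 : Integrable (fun ω => (Y i j ω)^2) ℙ := by
      simpa [sq] using hprodint i j i j
    have hint2 : Integrable (fun ω => (Y k l ω)^2) ℙ := by
      simpa [sq] using hprodint k l k l
    calc ∫ ω, Y i j ω * Y k l ω ∂ℙ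
        ≤ ∫ ω, ((Y i j ω)^2 + (Y k l ω)^2)/2 ∂ℙ := by
          refine integral_mono (hprodint i j k l) ((hint1.add hint2).div_const 2)
            (fun ω => ?_)
          dsimp only
          have h2 := sq_nonneg (Y i j ω - Y k l ω)
          ring_nf at h2 ⊢
          linarith
      _ = σ2 := by
          rw [integral_div, integral_add hint1 hint2, hY2 i j hij, hY2 k l hkl]
          ring
  -- per-term bound
  have hterm : ∀ i j k l : Fin m, ∫ ω, Y i j ω * Y k l ω ∂ℙ ≤
      (if k = i ∨ k = j ∨ l = i ∨ l = j then σ2 else 0) := by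
    intro i j k l
    by_cases hij : i = j
    · subst hij
      rw [hYdiag i]
      simp only [zero_mul, integral_zero]
      split_ifs
      exacts [hσ0, le_rfl]
    by_cases hkl : k = l
    · subst hkl
      rw [hYdiag k]
      simp only [mul_zero, integral_zero]
      split_ifs
      exacts [hσ0, le_rfl]
    by_cases h : k = i ∨ k = j ∨ l = i ∨ l = j
    · rw [if_pos h]; exact hbound i j k l hij hkl
    · rw [if_neg h]
      push_neg at h
      exact le_of_eq (hzero i j k l hij hkl (Ne.symm h.1) (Ne.symm h.2.2.1)
        (Ne.symm h.2.1) (Ne.symm h.2.2.2))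
  -- variance of the sum
  have hU : MemLp (fun ω => ∑ i : Fin m, ∑ j : Fin m, X i j ω) 2 ℙ :=
    memLp_finset_sum Finset.univ (fun i _ =>
      memLp_finset_sum Finset.univ (fun j _ => hXmem i j))
  have hEU : ∫ ω, (∑ i : Fin m, ∑ j : Fin m, X i j ω) ∂ℙ
      = ∑ i : Fin m, ∑ j : Fin m, c i j := by
    rw [integral_finset_sum _ (fun i _ =>
      integrable_finset_sum _ (fun j _ => hXint i j))]
    refine Finset.sum_congr rfl fun i _ => ?_
    rw [integral_finset_sum _ (fun j _ => hXint i j)]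
  have hvarU : variance (fun ω => ∑ i : Fin m, ∑ j : Fin m, X i j ω) ℙ
      = ∑ i : Fin m, ∑ k : Fin m, ∑ j : Fin m, ∑ l : Fin m,
          ∫ ω, Y i j ω * Y k l ω ∂ℙ := by
    rw [variance_eq_integral hU.aemeasurable]
    change ∫ ω, ((((fun ω => ∑ i : Fin m, ∑ j : Fin m, X i j ω) - fun _ => ∫ ω, (∑ i : Fin m, ∑ j : Fin m, X i j ω) ∂ℙ) ^ (2:ℕ) : Ω → ℝ) ω) ∂ℙ = _
    have hpt : ((fun ω => ∑ i : Fin m, ∑ j : Fin m, X i j ω)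
        - fun _ => ∫ ω, (∑ i : Fin m, ∑ j : Fin m, X i j ω) ∂ℙ) ^ (2:ℕ)
        = fun ω => ∑ i : Fin m, ∑ k : Fin m, ∑ j : Fin m, ∑ l : Fin m,
            Y i j ω * Y k l ω := by
      funext ω
      have hcent : (∑ i : Fin m, ∑ j : Fin m, X i j ω)
          - (∑ i : Fin m, ∑ j : Fin m, c i j)
          = ∑ i : Fin m, ∑ j : Fin m, Y i j ω := by
        rw [← Finset.sum_sub_distrib]
        refine Finset.sum_congr rfl fun i _ => ?_
        rw [← Finset.sum_sub_distrib]
      simp only [Pi.pow_apply, Pi.sub_apply, hEU, hcent, sq]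
      rw [Finset.sum_mul_sum]
      refine Finset.sum_congr rfl fun i _ => Finset.sum_congr rfl fun k _ => ?_
      rw [Finset.sum_mul_sum]
    rw [hpt]
    rw [integral_finset_sum _ (fun i _ => integrable_finset_sum _ (fun k _ =>
      integrable_finset_sum _ (fun j _ => integrable_finset_sum _ (fun l _ =>
        hprodint i j k l))))]
    refine Finset.sum_congr rfl fun i _ => ?_
    rw [integral_finset_sum _ (fun k _ => integrable_finset_sum _ (fun j _ =>
      integrable_finset_sum _ (fun l _ => hprodint i j k l)))]
    refine Finset.sum_congr rfl fun k _ => ?_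
    rw [integral_finset_sum _ (fun j _ =>
      integrable_finset_sum _ (fun l _ => hprodint i j k l))]
    refine Finset.sum_congr rfl fun j _ => ?_
    rw [integral_finset_sum _ (fun l _ => hprodint i j k l)]
  -- counting bound
  have hite : ∀ (P : Prop) [Decidable P], (0:ℝ) ≤ if P then σ2 else 0 := by
    intro P inst; split_ifs; exacts [hσ0, le_rfl]
  have hsum1 : ∀ x : Fin m, (∑ k : Fin m, (if k = x then σ2 else 0)) = σ2 := by
    intro x; simp
  have hinner : ∀ i j : Fin m, (∑ k : Fin m, ∑ l : Fin m,
      ((if k = i then σ2 else 0) + (if k = j then σ2 else 0)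
        + (if l = i then σ2 else 0) + (if l = j then σ2 else 0)))
      = 4 * m * σ2 := by
    intro i j
    have hin : ∀ k : Fin m, (∑ l : Fin m,
        ((if k = i then σ2 else 0) + (if k = j then σ2 else 0)
          + (if l = i then σ2 else 0) + (if l = j then σ2 else 0)))
        = (m : ℝ) * (if k = i then σ2 else 0) + (m : ℝ) * (if k = j then σ2 else 0)
          + σ2 + σ2 := by
      intro k
      simp only [Finset.sum_add_distrib, Finset.sum_const, Finset.card_univ,
        Fintype.card_fin, nsmul_eq_mul, hsum1]
    calc (∑ k : Fin m, ∑ l : Fin m,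
        ((if k = i then σ2 else 0) + (if k = j then σ2 else 0)
          + (if l = i then σ2 else 0) + (if l = j then σ2 else 0)))
        = ∑ k : Fin m, ((m : ℝ) * (if k = i then σ2 else 0)
            + (m : ℝ) * (if k = j then σ2 else 0) + σ2 + σ2) :=
          Finset.sum_congr rfl fun k _ => hin k
      _ = 4 * m * σ2 := by
          simp only [Finset.sum_add_distrib, Finset.sum_const, Finset.card_univ,
            Fintype.card_fin, nsmul_eq_mul, ← Finset.mul_sum, hsum1]
          ring
  have hsumbound : (∑ i : Fin m, ∑ k : Fin m, ∑ j : Fin m, ∑ l : Fin m,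
      ∫ ω, Y i j ω * Y k l ω ∂ℙ) ≤ 4 * m^3 * σ2 := by
    have hswap : (∑ i : Fin m, ∑ k : Fin m, ∑ j : Fin m, ∑ l : Fin m,
        ∫ ω, Y i j ω * Y k l ω ∂ℙ)
        = ∑ i : Fin m, ∑ j : Fin m, ∑ k : Fin m, ∑ l : Fin m,
            ∫ ω, Y i j ω * Y k l ω ∂ℙ :=
      Finset.sum_congr rfl fun i _ => Finset.sum_comm
    rw [hswap]
    calc (∑ i : Fin m, ∑ j : Fin m, ∑ k : Fin m, ∑ l : Fin m,
          ∫ ω, Y i j ω * Y k l ω ∂ℙ)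
        ≤ ∑ i : Fin m, ∑ j : Fin m, ∑ k : Fin m, ∑ l : Fin m,
            ((if k = i then σ2 else 0) + (if k = j then σ2 else 0)
              + (if l = i then σ2 else 0) + (if l = j then σ2 else 0)) := by
          refine Finset.sum_le_sum fun i _ => Finset.sum_le_sum fun j _ =>
            Finset.sum_le_sum fun k _ => Finset.sum_le_sum fun l _ => ?_
          refine (hterm i j k l).trans ?_
          by_cases h : k = i ∨ k = j ∨ l = i ∨ l = j
          · rw [if_pos h]
            rcases h with h|h|h|h <;> rw [if_pos h] <;>
              linarith [hite (k = i), hite (k = j), hite (l = i), hite (l = j)]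
          · rw [if_neg h]
            push_neg at h
            rw [if_neg h.1, if_neg h.2.1, if_neg h.2.2.1, if_neg h.2.2.2]
            norm_num
      _ = ∑ _i : Fin m, ∑ _j : Fin m, 4 * m * σ2 := by
          refine Finset.sum_congr rfl fun i _ => Finset.sum_congr rfl fun j _ => ?_
          exact hinner i j
      _ = 4 * m^3 * σ2 := by
          simp [Finset.sum_const, Finset.card_univ, nsmul_eq_mul]
          ring
  -- put it together
  have hrw : (fun ω => ((m : ℝ) ^ 2)⁻¹ *
      ∑ i : Fin m, ∑ j : Fin m, if i = j then 0 else K (z i ω) (z j ω))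
      = fun ω => ((m : ℝ) ^ 2)⁻¹ * ∑ i : Fin m, ∑ j : Fin m, X i j ω := by
    funext ω; simp only [hXdef]
  have hm0 : (0:ℝ) < m := by positivity
  calc variance (fun ω => ((m : ℝ) ^ 2)⁻¹ *
        ∑ i : Fin m, ∑ j : Fin m, if i = j then 0 else K (z i ω) (z j ω)) ℙ
      = (((m : ℝ) ^ 2)⁻¹)^2 * variance (fun ω => ∑ i : Fin m, ∑ j : Fin m, X i j ω) ℙ := by
        rw [hrw]; exact variance_const_mul _ _ _
    _ ≤ (((m : ℝ) ^ 2)⁻¹)^2 * (4 * m^3 * σ2) := by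
        rw [hvarU]
        exact mul_le_mul_of_nonneg_left hsumbound (by positivity)
    _ = 4 * σ2 / m := by
        field_simp
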